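/- For a prime p ≥ 7, K_{p,4} = (p²-1)(p²-19)/720. -/

import Mathlib

private lemma coeff_one_add_X_pow' (p n : ℕ) :
    PowerSeries.coeff (R := ℚ) n ((1 + PowerSeries.X) ^ p) = p.choose n := by
  have h : ((1 + PowerSeries.X : PowerSeries ℚ)) ^ p
      = (((1 + Polynomial.X) ^ p : Polynomial ℚ) : PowerSeries ℚ) := by
    simp [Polynomial.coe_pow, Polynomial.coe_add, Polynomial.coe_one]
  rw [h, Polynomial.coeff_coe, Polynomial.coeff_one_add_X_pow]

/-- For a prime `p ≥ 7`, `K_{p,4} = (p²-1)(p²-19)/720`. -/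
theorem stmt_4 (p : ℕ) (hp : p.Prime) (hp7 : 7 ≤ p)
    (Q : PowerSeries ℚ)
    (hQ : Q * ((1 + PowerSeries.X) ^ p - 1 - PowerSeries.X ^ p)
        = -(p : PowerSeries ℚ) * PowerSeries.X) :
    PowerSeries.coeff (R := ℚ) 4 Q = ((p : ℚ) ^ 2 - 1) * ((p : ℚ) ^ 2 - 19) / 720 := by
  have hp0 : (p:ℚ) ≠ 0 := by
    exact_mod_cast Nat.cast_ne_zero.mpr (by omega)
  have hDc : ∀ k, 1 ≤ k → k ≤ 5 →
      PowerSeries.coeff (R := ℚ) k ((1 + PowerSeries.X) ^ p - 1 - PowerSeries.X ^ p)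
        = p.choose k := by
    intro k h1 h5
    have hkp : k ≠ p := by omega
    have hk0 : k ≠ 0 := by omega
    simp [coeff_one_add_X_pow', PowerSeries.coeff_X_pow, hkp, PowerSeries.coeff_one, hk0]
  have hD0 : PowerSeries.coeff (R := ℚ) 0 ((1 + PowerSeries.X) ^ p - 1 - PowerSeries.X ^ p) = 0 := by
    have h0 : p ≠ 0 := by omega
    simp [coeff_one_add_X_pow', PowerSeries.coeff_X_pow, PowerSeries.coeff_one, Ne.symm h0]
    omega
  have hpc : ∀ k, k ≠ 0 → PowerSeries.coeff (R := ℚ) k ((p : PowerSeries ℚ)) = 0 := by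
    intro k hk
    rw [← map_natCast (PowerSeries.C (R := ℚ)) p, PowerSeries.coeff_C]
    simp [hk]
  have e1 := congrArg (PowerSeries.coeff (R := ℚ) 1) hQ
  have e2 := congrArg (PowerSeries.coeff (R := ℚ) 2) hQ
  have e3 := congrArg (PowerSeries.coeff (R := ℚ) 3) hQ
  have e4 := congrArg (PowerSeries.coeff (R := ℚ) 4) hQ
  have e5 := congrArg (PowerSeries.coeff (R := ℚ) 5) hQ
  simp only [PowerSeries.coeff_mul, Finset.Nat.sum_antidiagonal_eq_sum_range_succ_mk,
    Finset.sum_range_succ, Finset.sum_range_zero] at e1 e2 e3 e4 e5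
  norm_num [hD0, hDc 1 (by norm_num) (by norm_num), hDc 2 (by norm_num) (by norm_num),
    hDc 3 (by norm_num) (by norm_num), hDc 4 (by norm_num) (by norm_num),
    hDc 5 (by norm_num) (by norm_num), PowerSeries.coeff_X,
    hpc 1 (by norm_num), hpc 2 (by norm_num), hpc 3 (by norm_num),
    hpc 4 (by norm_num), hpc 5 (by norm_num)] at e1 e2 e3 e4 e5
  -- binomial coefficient values in ℚ
  have hC : ∀ k, (p.choose k : ℚ) * (k.factorial : ℚ) = (p.descFactorial k : ℚ) := by
    intro k
    rw [← Nat.cast_mul]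
    norm_cast
    rw [Nat.descFactorial_eq_factorial_mul_choose, Nat.mul_comm]
  have s1 := Nat.cast_sub (by omega : 1 ≤ p) (R := ℚ)
  have s2 := Nat.cast_sub (by omega : 2 ≤ p) (R := ℚ)
  have s3 := Nat.cast_sub (by omega : 3 ≤ p) (R := ℚ)
  have s4 := Nat.cast_sub (by omega : 4 ≤ p) (R := ℚ)
  have c2 : (p.choose 2 : ℚ) = (p:ℚ)*((p:ℚ)-1)/2 := by
    have h := hC 2
    simp [Nat.descFactorial, Nat.factorial, s1, s2, s3, s4] at h
    linear_combination h/2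
  have c3 : (p.choose 3 : ℚ) = (p:ℚ)*((p:ℚ)-1)*((p:ℚ)-2)/6 := by
    have h := hC 3
    simp [Nat.descFactorial, Nat.factorial, s1, s2, s3, s4] at h
    linear_combination h/6
  have c4 : (p.choose 4 : ℚ) = (p:ℚ)*((p:ℚ)-1)*((p:ℚ)-2)*((p:ℚ)-3)/24 := by
    have h := hC 4
    simp [Nat.descFactorial, Nat.factorial, s1, s2, s3, s4] at h
    linear_combination h/24
  have c5 : (p.choose 5 : ℚ) = (p:ℚ)*((p:ℚ)-1)*((p:ℚ)-2)*((p:ℚ)-3)*((p:ℚ)-4)/120 := by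
    have h := hC 5
    simp [Nat.descFactorial, Nat.factorial, s1, s2, s3, s4] at h
    linear_combination h/120
  simp only [c2, c3, c4, c5] at e2 e3 e4 e5
  have hq0 : PowerSeries.constantCoeff (R := ℚ) Q = -1 :=
    mul_right_cancel₀ hp0 (by linear_combination e1)
  rw [hq0] at e2 e3 e4 e5
  have hq1 : PowerSeries.coeff (R := ℚ) 1 Q = ((p:ℚ)-1)/2 :=
    mul_right_cancel₀ hp0 (by linear_combination e2)
  rw [hq1] at e3 e4 e5
  have hq2 : PowerSeries.coeff (R := ℚ) 2 Q = -((p:ℚ)^2-1)/12 :=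
    mul_right_cancel₀ hp0 (by linear_combination e3)
  rw [hq2] at e4 e5
  have hq3 : PowerSeries.coeff (R := ℚ) 3 Q = ((p:ℚ)^2-1)/24 :=
    mul_right_cancel₀ hp0 (by linear_combination e4)
  rw [hq3] at e5
  exact mul_right_cancel₀ hp0 (by linear_combination e5)
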